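/- Let X_1, …, X_n (n ≥ 2) be jointly distributed random variables on finite alphabets, and let γ be a fractional partition with respect to a family 𝓕 of subsets of [n] satisfying the standing assumptions. Define the truncated family 𝓕̃ = {F ∩ [n−1] : F ∈ 𝓕} (with multiplicity) and the weights γ̃(F ∩ [n−1]) = γ(F). Then (𝓕, γ)-MI(X_1; …; X_n) = (𝓕̃, γ̃)-MI(X_1; …; X_{n−1}) + ∑_{F ∈ 𝓕 : n ∈ F} γ(F) · I(X_n ; X_{[n−1] ∖ F} | X_{[n−1] ∩ F}). -/
import Mathlib


open Finset
open scoped Classical BigOperators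

/-- Entropy of the marginal of `p` on the coordinates in `F`
    (`H(X_F) = ∑ negMulLog (p_F)`, with `0 log 0 = 0`). -/
noncomputable def Hent {n : ℕ} {𝒳 : Fin n → Type} [∀ i, Fintype (𝒳 i)]
    (p : (∀ i, 𝒳 i) → ℝ) (F : Finset (Fin n)) : ℝ :=
  ∑ y : (i : {i // i ∈ F}) → 𝒳 i.1,
    Real.negMulLog
      (∑ x ∈ Finset.univ.filter (fun x : ∀ i, 𝒳 i => ∀ i : {i // i ∈ F}, x i.1 = y i), p x)

theorem stmt_17 (n : ℕ) (hn : 2 ≤ n)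
    (𝒳 : Fin n → Type) [∀ i, Fintype (𝒳 i)] [∀ i, Nonempty (𝒳 i)]
    (p : (∀ i, 𝒳 i) → ℝ)
    (hp0 : ∀ x, 0 ≤ p x) (hp1 : ∑ x : ∀ i, 𝒳 i, p x = 1)
    (ι : Type) [Fintype ι] (S : ι → Finset (Fin n)) (γ : ι → ℝ)
    (hproper : ∀ k, S k ≠ Finset.univ)
    (hpos : ∀ k, 0 < γ k)
    (hsep : ∀ i j : Fin n, i ≠ j → ¬ (∀ k, i ∈ S k ↔ j ∈ S k))
    (hfrac : ∀ i : Fin n, ∑ k ∈ Finset.univ.filter (fun k => i ∈ S k), γ k = 1)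
    (ln : Fin n) (hln : ln = ⟨n - 1, by omega⟩) :
    (∑ k : ι, γ k * Hent p (S k)) - Hent p Finset.univ =
      ((∑ k : ι, γ k * Hent p ((S k).erase ln)) - Hent p (Finset.univ.erase ln)) +
      ∑ k ∈ Finset.univ.filter (fun k => ln ∈ S k), γ k *
        (Hent p ({ln} ∪ ((Finset.univ.erase ln) ∩ S k)) +
          Hent p (((Finset.univ.erase ln) \ S k) ∪ ((Finset.univ.erase ln) ∩ S k)) -
          Hent p ({ln} ∪ ((Finset.univ.erase ln) \ S k) ∪ ((Finset.univ.erase ln) ∩ S k)) -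
          Hent p ((Finset.univ.erase ln) ∩ S k)) := by
  -- Simplify the four set expressions for k with ln ∈ S k.
  have hA4 : ∀ k : ι, (Finset.univ.erase ln) ∩ S k = (S k).erase ln := by
    intro k; ext x; simp [Finset.mem_erase, and_comm]
  have key : ∀ k ∈ Finset.univ.filter (fun k => ln ∈ S k),
      γ k *
        (Hent p ({ln} ∪ ((Finset.univ.erase ln) ∩ S k)) +
          Hent p (((Finset.univ.erase ln) \ S k) ∪ ((Finset.univ.erase ln) ∩ S k)) -
          Hent p ({ln} ∪ ((Finset.univ.erase ln) \ S k) ∪ ((Finset.univ.erase ln) ∩ S k)) -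
          Hent p ((Finset.univ.erase ln) ∩ S k)) =
      γ k * ((Hent p (S k) - Hent p ((S k).erase ln)) +
             (Hent p (Finset.univ.erase ln) - Hent p Finset.univ)) := by
    intro k hk
    simp only [Finset.mem_filter, Finset.mem_univ, true_and] at hk
    have h1 : {ln} ∪ ((Finset.univ.erase ln) ∩ S k) = S k := by
      rw [hA4]; ext x; by_cases hx : x = ln <;> simp [hx, hk]
    have h2 : ((Finset.univ.erase ln) \ S k) ∪ ((Finset.univ.erase ln) ∩ S k) =
        Finset.univ.erase ln := Finset.sdiff_union_inter _ _
    have h3 : {ln} ∪ ((Finset.univ.erase ln) \ S k) ∪ ((Finset.univ.erase ln) ∩ S k) =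
        (Finset.univ : Finset (Fin n)) := by
      rw [Finset.union_assoc, h2]; ext x; by_cases hx : x = ln <;> simp [hx]
    rw [h1, h2, h3, hA4]; ring
  rw [Finset.sum_congr rfl key]
  have hsplit : ∀ k ∈ Finset.univ.filter (fun k => ¬ ln ∈ S k),
      γ k * Hent p (S k) - γ k * Hent p ((S k).erase ln) = 0 := by
    intro k hk
    simp only [Finset.mem_filter, Finset.mem_univ, true_and] at hk
    rw [Finset.erase_eq_of_notMem hk]; ring
  have hdiff : (∑ k : ι, γ k * Hent p (S k)) - (∑ k : ι, γ k * Hent p ((S k).erase ln)) =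
      ∑ k ∈ Finset.univ.filter (fun k => ln ∈ S k),
        γ k * (Hent p (S k) - Hent p ((S k).erase ln)) := by
    rw [← Finset.sum_sub_distrib,
      ← Finset.sum_filter_add_sum_filter_not Finset.univ (fun k => ln ∈ S k)
        (fun k => γ k * Hent p (S k) - γ k * Hent p ((S k).erase ln)),
      Finset.sum_congr rfl hsplit, Finset.sum_const_zero, add_zero]
    exact Finset.sum_congr rfl fun k _ => by ring
  have hmuldist : ∑ k ∈ Finset.univ.filter (fun k => ln ∈ S k),
      γ k * ((Hent p (S k) - Hent p ((S k).erase ln)) +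
             (Hent p (Finset.univ.erase ln) - Hent p Finset.univ)) =
      (∑ k ∈ Finset.univ.filter (fun k => ln ∈ S k),
        γ k * (Hent p (S k) - Hent p ((S k).erase ln))) +
      (∑ k ∈ Finset.univ.filter (fun k => ln ∈ S k), γ k) *
        (Hent p (Finset.univ.erase ln) - Hent p Finset.univ) := by
    rw [Finset.sum_mul, ← Finset.sum_add_distrib]
    exact Finset.sum_congr rfl fun k _ => by ring
  rw [hmuldist, hfrac ln, ← hdiff]; ring
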